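/- Identify ℝ⁴ with ℝ² × ℝ² with coordinates (x₁, y₁, x₂, y₂), equipped with the standard symplectic form ω₀(u, v) = u₁v₂ − u₂v₁ + u₃v₄ − u₄v₃, and let W₁ = ℝ² × {0} and W₂ = {0} × ℝ². For a differentiable function F : ℝ⁴ → ℝ, let X_F : ℝ⁴ → ℝ⁴ denote its Hamiltonian vector field, defined pointwise as the unique vector with ω₀(X_F(p), v) = DF_p(v) for all v ∈ ℝ⁴ (explicitly, X_F = (∂F/∂y₁, −∂F/∂x₁, ∂F/∂y₂, −∂F/∂x₂)). Let H : ℝ⁴ → ℝ be differentiable with X_H tangent to the coordinate planes, i.e., X_H(p) ∈ W₁ for every p ∈ W₁ and X_H(p) ∈ W₂ for every p ∈ W₂. Let f : ℝ × ℝ → ℝ be differentiable and define g : ℝ⁴ → ℝ by g(x₁, y₁, x₂, y₂) = f(x₁² + y₁², x₂² + y₂²). Then the Hamiltonian vector field of the product g·H is also tangent to the coordinate planes: X_{g·H}(p) ∈ W₁ for every p ∈ W₁ and X_{g·H}(p) ∈ W₂ for every p ∈ W₂. -/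

import Mathlib

/-- The standard symplectic form on `ℝ⁴` with coordinates `(x₁, y₁, x₂, y₂)`. -/
def omega0 (u v : Fin 4 → ℝ) : ℝ :=
  u 0 * v 1 - u 1 * v 0 + u 2 * v 3 - u 3 * v 2

/-- The coordinate plane `W₁ = ℝ² × {0}`. -/
def W1 : Set (Fin 4 → ℝ) := {u | u 2 = 0 ∧ u 3 = 0}

/-- The coordinate plane `W₂ = {0} × ℝ²`. -/
def W2 : Set (Fin 4 → ℝ) := {u | u 0 = 0 ∧ u 1 = 0}

/-- The Hamiltonian vector field of `F : ℝ⁴ → ℝ` with respect to `ω₀`: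
`X_F = (∂F/∂y₁, −∂F/∂x₁, ∂F/∂y₂, −∂F/∂x₂)`; equivalently the unique vector field
with `ω₀ (X_F p) v = DF_p v` for all `v`. -/
noncomputable def hamVF (F : (Fin 4 → ℝ) → ℝ) (p : Fin 4 → ℝ) : Fin 4 → ℝ :=
  ![fderiv ℝ F p (Pi.single 1 1), -(fderiv ℝ F p (Pi.single 0 1)),
    fderiv ℝ F p (Pi.single 3 1), -(fderiv ℝ F p (Pi.single 2 1))]

/-- The derivative of `q ↦ (q₀² + q₁², q₂² + q₃²)` at `p`. -/
noncomputable def philm (p : Fin 4 → ℝ) : (Fin 4 → ℝ) →L[ℝ] ℝ × ℝ :=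
  ContinuousLinearMap.prod
    (((2:ℝ) * p 0) • (ContinuousLinearMap.proj (R := ℝ) (φ := fun _ : Fin 4 => ℝ) 0) +
     ((2:ℝ) * p 1) • (ContinuousLinearMap.proj (R := ℝ) (φ := fun _ : Fin 4 => ℝ) 1))
    (((2:ℝ) * p 2) • (ContinuousLinearMap.proj (R := ℝ) (φ := fun _ : Fin 4 => ℝ) 2) +
     ((2:ℝ) * p 3) • (ContinuousLinearMap.proj (R := ℝ) (φ := fun _ : Fin 4 => ℝ) 3))

lemma phi_hasFDerivAt (p : Fin 4 → ℝ) :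
    HasFDerivAt (fun q : Fin 4 → ℝ => (q 0 ^ 2 + q 1 ^ 2, q 2 ^ 2 + q 3 ^ 2))
      (philm p) p := by
  have h : ∀ i : Fin 4, HasFDerivAt (fun q : Fin 4 → ℝ => q i)
      (ContinuousLinearMap.proj (R := ℝ) (φ := fun _ : Fin 4 => ℝ) i) p :=
    fun i => (ContinuousLinearMap.proj (R := ℝ) (φ := fun _ : Fin 4 => ℝ) i).hasFDerivAt
  have h2 : ∀ i : Fin 4, HasFDerivAt (fun q : Fin 4 → ℝ => q i ^ 2)
      (((2:ℝ) * p i) • (ContinuousLinearMap.proj (R := ℝ) (φ := fun _ : Fin 4 => ℝ) i)) p := by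
    intro i
    have : HasFDerivAt (fun q : Fin 4 → ℝ => q i * q i)
        (p i • (ContinuousLinearMap.proj (R := ℝ) (φ := fun _ : Fin 4 => ℝ) i) +
          p i • (ContinuousLinearMap.proj (R := ℝ) (φ := fun _ : Fin 4 => ℝ) i)) p :=
      (h i).mul (h i)
    simp only [← sq] at this
    convert this using 1
    ext v
    simp
    ring
  exact HasFDerivAt.prodMk ((h2 0).add (h2 1)) ((h2 2).add (h2 3))

lemma philm_single (p : Fin 4 → ℝ) (i : Fin 4) (hp : p i = 0) :
    philm p (Pi.single i 1) = 0 := by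
  fin_cases i <;> simp_all [philm, Pi.single_apply, Prod.ext_iff]

/-- Key directional computation: if the radial factor and `H` both have vanishing
derivative along `Pi.single i 1` at `p`, so does the product. -/
lemma fderiv_cutoff_mul (H : (Fin 4 → ℝ) → ℝ) (hH : Differentiable ℝ H)
    (f : ℝ × ℝ → ℝ) (hf : Differentiable ℝ f) (p : Fin 4 → ℝ) (i : Fin 4)
    (hp : p i = 0) (hHi : fderiv ℝ H p (Pi.single i 1) = 0) :
    fderiv ℝ (fun q : Fin 4 → ℝ =>
      f (q 0 ^ 2 + q 1 ^ 2, q 2 ^ 2 + q 3 ^ 2) * H q) p (Pi.single i 1) = 0 := by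
  have hgd : HasFDerivAt (fun q : Fin 4 → ℝ => f (q 0 ^ 2 + q 1 ^ 2, q 2 ^ 2 + q 3 ^ 2))
      ((fderiv ℝ f (p 0 ^ 2 + p 1 ^ 2, p 2 ^ 2 + p 3 ^ 2)).comp (philm p)) p :=
    (hf _).hasFDerivAt.comp p (phi_hasFDerivAt p)
  have hprod : HasFDerivAt (fun q : Fin 4 → ℝ =>
      f (q 0 ^ 2 + q 1 ^ 2, q 2 ^ 2 + q 3 ^ 2) * H q) _ p := hgd.mul (hH p).hasFDerivAt
  rw [hprod.fderiv]
  simp [philm_single p i hp, hHi]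

/-- If `X_H` is tangent to the coordinate planes `W₁`, `W₂`, and
`g (x₁, y₁, x₂, y₂) = f (x₁² + y₁², x₂² + y₂²)` for a differentiable `f`, then the
Hamiltonian vector field of `g·H` is also tangent to the coordinate planes. -/
theorem hamVF_smul_cutoff_tangent
    (H : (Fin 4 → ℝ) → ℝ) (hH : Differentiable ℝ H)
    (hW1 : ∀ p ∈ W1, hamVF H p ∈ W1) (hW2 : ∀ p ∈ W2, hamVF H p ∈ W2)
    (f : ℝ × ℝ → ℝ) (hf : Differentiable ℝ f) :
    (∀ p ∈ W1,
        hamVF (fun q : Fin 4 → ℝ =>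
          f (q 0 ^ 2 + q 1 ^ 2, q 2 ^ 2 + q 3 ^ 2) * H q) p ∈ W1) ∧
    (∀ p ∈ W2,
        hamVF (fun q : Fin 4 → ℝ =>
          f (q 0 ^ 2 + q 1 ^ 2, q 2 ^ 2 + q 3 ^ 2) * H q) p ∈ W2) := by
  constructor
  · intro p hp
    obtain ⟨h2, h3⟩ := hp
    obtain ⟨hc2, hc3⟩ := hW1 p ⟨h2, h3⟩
    simp only [hamVF, W1, Set.mem_setOf_eq, Matrix.cons_val_two, Matrix.tail_cons,
      Matrix.cons_val_three, Matrix.head_cons, neg_eq_zero] at hc2 hc3 ⊢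
    exact ⟨fderiv_cutoff_mul H hH f hf p 3 h3 hc2,
           fderiv_cutoff_mul H hH f hf p 2 h2 hc3⟩
  · intro p hp
    obtain ⟨h0, h1⟩ := hp
    obtain ⟨hc0, hc1⟩ := hW2 p ⟨h0, h1⟩
    simp only [hamVF, W2, Set.mem_setOf_eq, Matrix.cons_val_zero, Matrix.cons_val_one,
      Matrix.head_cons, neg_eq_zero] at hc0 hc1 ⊢
    exact ⟨fderiv_cutoff_mul H hH f hf p 1 h1 hc0,
           fderiv_cutoff_mul H hH f hf p 0 h0 hc1⟩
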